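/- Let F be a field and s, t positive integers. Then the minimal polynomial of the Kronecker product J_s(1) ⊗ J_t(1) is (X − 1)^{s ∧ t}. -/

import Mathlib

open Polynomial Matrix
open scoped Kronecker

open scoped Classical in
/-- For positive integers `s`, `t`, `wedge F s t` is the largest value of `i + j + 1` over
pairs `0 ≤ i ≤ s-1`, `0 ≤ j ≤ t-1` such that the binomial coefficient `C(i+j, i)`, viewed
as an element of `F`, is nonzero; moreover `wedge F s 0 = wedge F 0 t = 0`. -/
noncomputable def wedge (F : Type*) [Field F] (s t : ℕ) : ℕ :=
  ((Finset.range s) ×ˢ (Finset.range t)).sup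
    (fun p => if (((p.1 + p.2).choose p.1 : F)) ≠ 0 then p.1 + p.2 + 1 else 0)

/-- `jordan F s a` is the `s × s` Jordan block with eigenvalue `a`:
the entry `(i, j)` is `a` if `j = i`, `1` if `j = i + 1`, and `0` otherwise. -/
def jordan (F : Type*) [Field F] (s : ℕ) (a : F) : Matrix (Fin s) (Fin s) F :=
  Matrix.of fun i j => if (j : ℕ) = (i : ℕ) then a else if (j : ℕ) = (i : ℕ) + 1 then 1 else 0


section Aux

lemma delta_choose (k r : ℕ) :
    ∑ m ∈ Finset.range (k+1), (-1:ℤ)^(k-m) * (k.choose m) * (m.choose r)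
      = if r = k then 1 else 0 := by
  by_cases hrk : r ≤ k
  · have h1 : ∑ m ∈ Finset.range (k+1), (-1:ℤ)^(k-m) * (k.choose m) * (m.choose r)
        = ∑ m ∈ Finset.Ico r (k+1), (-1:ℤ)^(k-m) * (k.choose m) * (m.choose r) := by
      rw [Finset.range_eq_Ico]
      refine (Finset.sum_subset (Finset.Ico_subset_Ico (Nat.zero_le _) le_rfl) ?_).symm
      intro m hm hm'
      simp only [Finset.mem_Ico] at hm hm'
      rw [Nat.choose_eq_zero_of_lt (show m < r by omega)]
      simp
    rw [h1, Finset.sum_Ico_eq_sum_range]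
    have h2 : ∀ u ∈ Finset.range (k + 1 - r), (-1:ℤ)^(k-(r+u)) * (k.choose (r+u)) * ((r+u).choose r)
        = (k.choose r : ℤ) * ((-1)^(k-r) * ((-1)^u * ((k-r).choose u))) := by
      intro u hu
      simp only [Finset.mem_range] at hu
      have h3 : (k.choose (r+u)) * ((r+u).choose r) = k.choose r * (k-r).choose (r+u-r) :=
        Nat.choose_mul (by omega)
      have h4 : r + u - r = u := by omega
      rw [h4] at h3
      have h5 : (-1:ℤ)^(k-(r+u)) = (-1)^(k-r) * (-1)^u := by
        have he : (k - r) = (k - (r+u)) + u := by omega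
        rw [he, pow_add]
        rcases Nat.even_or_odd u with h | h
        · rw [h.neg_one_pow]; ring
        · rw [h.neg_one_pow]; ring
      rw [h5]
      have h3' : ((k.choose (r+u)) : ℤ) * ((r+u).choose r) = (k.choose r : ℤ) * (k-r).choose u := by
        exact_mod_cast congrArg (Nat.cast : ℕ → ℤ) h3
      calc (-1:ℤ)^(k-r) * (-1)^u * (k.choose (r+u)) * ((r+u).choose r)
          = ((k.choose (r+u)) : ℤ) * ((r+u).choose r) * ((-1)^(k-r) * (-1)^u) := by ring
        _ = (k.choose r : ℤ) * (k-r).choose u * ((-1)^(k-r) * (-1)^u) := by rw [h3']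
        _ = (k.choose r : ℤ) * ((-1)^(k-r) * ((-1)^u * ((k-r).choose u))) := by ring
    rw [Finset.sum_congr rfl h2, ← Finset.mul_sum, ← Finset.mul_sum]
    have h6 : k + 1 - r = (k - r) + 1 := by omega
    rw [h6, Int.alternating_sum_range_choose]
    rcases eq_or_ne r k with h | h
    · simp [h]
    · have : k - r ≠ 0 := by omega
      simp [this, h]
  · have hz : ∀ m ∈ Finset.range (k+1), (-1:ℤ)^(k-m) * (k.choose m) * (m.choose r) = 0 := by
      intro m hm
      simp only [Finset.mem_range] at hm
      rw [Nat.choose_eq_zero_of_lt (show m < r by omega)]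
      simp
    rw [Finset.sum_congr rfl hz]
    simp
    omega

lemma choose_mul_choose_sum (m i j : ℕ) :
    (m.choose i) * (m.choose j)
      = ∑ ab ∈ Finset.HasAntidiagonal.antidiagonal j, (i.choose ab.1) * ((m.choose (i + ab.2)) * ((i+ab.2).choose i)) := by
  by_cases him : i ≤ m
  · have hv : m.choose j = ∑ ab ∈ Finset.HasAntidiagonal.antidiagonal j, (i.choose ab.1) * ((m-i).choose ab.2) := by
      conv_lhs => rw [show m = i + (m - i) by omega]
      exact Nat.add_choose_eq i (m-i) j
    rw [hv, Finset.mul_sum]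
    refine Finset.sum_congr rfl fun ab _ => ?_
    have key : (m.choose (i + ab.2)) * ((i+ab.2).choose i) = m.choose i * (m-i).choose ab.2 := by
      by_cases hbm : i + ab.2 ≤ m
      · have := Nat.choose_mul (n := m) (Nat.le_add_right i ab.2)
        simpa using this
      · rw [Nat.choose_eq_zero_of_lt (show m < i + ab.2 by omega),
          Nat.choose_eq_zero_of_lt (show m - i < ab.2 by omega)]
        simp
    rw [key]; ring
  · rw [Nat.choose_eq_zero_of_lt (show m < i by omega), Nat.zero_mul]
    refine (Finset.sum_eq_zero fun ab _ => ?_).symm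
    rw [Nat.choose_eq_zero_of_lt (show m < i + ab.2 by omega)]
    simp

lemma S_eval (k i j : ℕ) :
    ∑ m ∈ Finset.range (k+1), ((-1:ℤ)^(k-m) * (k.choose m) * ((m.choose i) * (m.choose j)))
      = if i ≤ k ∧ k ≤ i + j then ((k.choose i) * (i.choose (i+j-k)) : ℤ) else 0 := by
  have step1 : ∀ m : ℕ, ((m.choose i : ℤ) * (m.choose j))
      = ∑ ab ∈ Finset.HasAntidiagonal.antidiagonal j,
          (i.choose ab.1 : ℤ) * ((m.choose (i + ab.2)) * ((i+ab.2).choose i)) := by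
    intro m
    have h := choose_mul_choose_sum m i j
    have h2 := congrArg (Nat.cast : ℕ → ℤ) h
    push_cast at h2
    exact h2
  calc ∑ m ∈ Finset.range (k+1), ((-1:ℤ)^(k-m) * (k.choose m) * ((m.choose i) * (m.choose j)))
      = ∑ m ∈ Finset.range (k+1), ∑ ab ∈ Finset.HasAntidiagonal.antidiagonal j,
          ((i.choose ab.1 : ℤ) * ((i+ab.2).choose i)) * ((-1:ℤ)^(k-m) * (k.choose m) * (m.choose (i + ab.2))) := by
        refine Finset.sum_congr rfl fun m _ => ?_
        rw [step1 m, Finset.mul_sum]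
        exact Finset.sum_congr rfl fun ab _ => by ring
    _ = ∑ ab ∈ Finset.HasAntidiagonal.antidiagonal j,
          ((i.choose ab.1 : ℤ) * ((i+ab.2).choose i)) *
            (∑ m ∈ Finset.range (k+1), (-1:ℤ)^(k-m) * (k.choose m) * (m.choose (i + ab.2))) := by
        rw [Finset.sum_comm]
        exact Finset.sum_congr rfl fun ab _ => by rw [Finset.mul_sum]
    _ = ∑ ab ∈ Finset.HasAntidiagonal.antidiagonal j,
          ((i.choose ab.1 : ℤ) * ((i+ab.2).choose i)) * (if i + ab.2 = k then 1 else 0) := by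
        exact Finset.sum_congr rfl fun ab _ => by rw [delta_choose]
    _ = if i ≤ k ∧ k ≤ i + j then ((k.choose i) * (i.choose (i+j-k)) : ℤ) else 0 := by
        by_cases hc : i ≤ k ∧ k ≤ i + j
        · rw [if_pos hc]
          rw [Finset.sum_eq_single (i+j-k, k-i)]
          · rw [if_pos (by omega), mul_one, show i + (k-i) = k by omega]
            ring
          · intro ab hab hne
            rw [Finset.HasAntidiagonal.mem_antidiagonal] at hab
            rw [if_neg, mul_zero]
            intro hcontra
            apply hne
            have : ab.2 = k - i := by omega
            have : ab.1 = i + j - k := by omega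
            exact Prod.ext this (by omega)
          · intro hmem
            exfalso
            exact hmem (Finset.HasAntidiagonal.mem_antidiagonal.mpr (by omega))
        · rw [if_neg hc]
          refine Finset.sum_eq_zero fun ab hab => ?_
          rw [Finset.HasAntidiagonal.mem_antidiagonal] at hab
          rw [if_neg (by omega), mul_zero]

variable {F : Type*} [Field F] {s t : ℕ}


lemma sum_ite_val {n : ℕ} (c : ℕ) (f : Fin n → F) :
    (∑ l : Fin n, (if (l:ℕ) = c then (1:F) else 0) * f l) = if h : c < n then f ⟨c, h⟩ else 0 := by
  split_ifs with h
  · rw [Finset.sum_eq_single ⟨c, h⟩]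
    · simp
    · intro l _ hne
      rw [if_neg, zero_mul]
      intro hc; exact hne (Fin.ext hc)
    · intro hmem; exact absurd (Finset.mem_univ _) hmem
  · refine Finset.sum_eq_zero fun l _ => ?_
    rw [if_neg, zero_mul]
    intro hc; exact h (hc ▸ l.isLt)

lemma jordan_pow (m : ℕ) :
    (jordan F s 1) ^ m = Matrix.of fun i j : Fin s =>
      if (i:ℕ) ≤ (j:ℕ) then ((m.choose ((j:ℕ) - (i:ℕ))) : F) else 0 := by
  induction m with
  | zero =>
    ext i j
    simp only [pow_zero, Matrix.of_apply, Matrix.one_apply]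
    rcases eq_or_ne i j with h | h
    · subst h; simp
    · rw [if_neg h]
      by_cases hle : (i:ℕ) ≤ (j:ℕ)
      · have hne : (i:ℕ) ≠ (j:ℕ) := fun hc => h (Fin.ext hc)
        rw [if_pos hle, Nat.choose_eq_zero_of_lt (by omega)]
        simp
      · rw [if_neg hle]
  | succ m ih =>
    rw [pow_succ', ih]
    ext i j
    rw [Matrix.mul_apply]
    have hsplit : ∀ l : Fin s, jordan F s 1 i l
        = (if (l:ℕ) = (i:ℕ) then (1:F) else 0) + (if (l:ℕ) = (i:ℕ)+1 then 1 else 0) := by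
      intro l
      simp only [jordan, Matrix.of_apply]
      split_ifs <;> first | (exfalso; omega) | simp
    calc ∑ l, jordan F s 1 i l * (Matrix.of fun i j : Fin s =>
            if (i:ℕ) ≤ (j:ℕ) then ((m.choose ((j:ℕ) - (i:ℕ))) : F) else 0) l j
        = (∑ l : Fin s, (if (l:ℕ) = (i:ℕ) then (1:F) else 0) *
              (if (l:ℕ) ≤ (j:ℕ) then ((m.choose ((j:ℕ) - (l:ℕ))) : F) else 0))
          + (∑ l : Fin s, (if (l:ℕ) = (i:ℕ)+1 then (1:F) else 0) *
              (if (l:ℕ) ≤ (j:ℕ) then ((m.choose ((j:ℕ) - (l:ℕ))) : F) else 0)) := by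
          rw [← Finset.sum_add_distrib]
          refine Finset.sum_congr rfl fun l _ => ?_
          rw [hsplit l, add_mul, Matrix.of_apply]
      _ = Matrix.of (fun i j : Fin s =>
            if (i:ℕ) ≤ (j:ℕ) then (((m+1).choose ((j:ℕ) - (i:ℕ))) : F) else 0) i j := by
          rw [sum_ite_val, sum_ite_val, dif_pos i.isLt]
          simp only [Matrix.of_apply, Fin.eta, Fin.val_mk]
          rw [dite_eq_ite]
          have hj := j.isLt
          by_cases hij : (i:ℕ) ≤ (j:ℕ)
          · rw [if_pos hij, if_pos hij]
            by_cases h2 : (i:ℕ)+1 ≤ (j:ℕ)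
            · have hs2 : (i:ℕ)+1 < s := by omega
              rw [if_pos hs2, if_pos h2,
                show (j:ℕ) - (i:ℕ) = ((j:ℕ)-((i:ℕ)+1))+1 by omega, Nat.choose_succ_succ]
              push_cast
              ring
            · have heq : (j:ℕ) - (i:ℕ) = 0 := by omega
              rw [heq]
              split_ifs with h3 <;> simp
          · rw [if_neg hij, if_neg hij]
            have h2 : ¬ ((i:ℕ)+1 ≤ (j:ℕ)) := by omega
            split_ifs with h3 <;> simp

lemma kron_pow (A : Matrix (Fin s) (Fin s) F) (B : Matrix (Fin t) (Fin t) F) (m : ℕ) :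
    (A ⊗ₖ B) ^ m = (A ^ m) ⊗ₖ (B ^ m) := by
  induction m with
  | zero => simp [Matrix.one_kronecker_one]
  | succ m ih => rw [pow_succ, pow_succ, pow_succ, ih, Matrix.mul_kronecker_mul]

noncomputable def entryVal (F : Type*) [Field F] (k i j : ℕ) : F :=
  if i ≤ k ∧ k ≤ i + j then ((k.choose i * i.choose (i+j-k) : ℕ) : F) else 0

lemma Mpow_apply (k : ℕ) (x y : Fin s × Fin t) :
    ((jordan F s 1 ⊗ₖ jordan F t 1 - 1) ^ k) x y =
      if (x.1:ℕ) ≤ (y.1:ℕ) ∧ (x.2:ℕ) ≤ (y.2:ℕ)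
      then entryVal F k ((y.1:ℕ) - (x.1:ℕ)) ((y.2:ℕ) - (x.2:ℕ))
      else 0 := by
  set U := jordan F s 1 ⊗ₖ jordan F t 1 with hUdef
  have hU1 : Commute U (-1 : Matrix (Fin s × Fin t) (Fin s × Fin t) F) :=
    (Commute.one_right U).neg_right
  rw [sub_eq_add_neg, hU1.add_pow, Matrix.sum_apply]
  have hterm : ∀ m ∈ Finset.range (k+1),
      (U^m * (-1 : Matrix (Fin s × Fin t) (Fin s × Fin t) F)^(k-m)
        * ((k.choose m : ℕ) : Matrix (Fin s × Fin t) (Fin s × Fin t) F)) x y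
      = ((-1:F)^(k-m) * (k.choose m : F)) *
          ((if (x.1:ℕ) ≤ (y.1:ℕ) then ((m.choose ((y.1:ℕ) - (x.1:ℕ))) : F) else 0)
            * (if (x.2:ℕ) ≤ (y.2:ℕ) then ((m.choose ((y.2:ℕ) - (x.2:ℕ))) : F) else 0)) := by
    intro m _
    have hmat : U^m * (-1 : Matrix (Fin s × Fin t) (Fin s × Fin t) F)^(k-m)
        * ((k.choose m : ℕ) : Matrix (Fin s × Fin t) (Fin s × Fin t) F)
        = ((-1:F)^(k-m) * (k.choose m : F)) • U^m := by
      rw [show (-1 : Matrix (Fin s × Fin t) (Fin s × Fin t) F) = (-1:F) • 1 by simp]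
      rw [_root_.smul_pow, one_pow]
      rw [show ((k.choose m : ℕ) : Matrix (Fin s × Fin t) (Fin s × Fin t) F)
          = ((k.choose m : F)) • 1 by rw [Matrix.smul_one_eq_diagonal, Matrix.diagonal_natCast]]
      simp [mul_smul_comm, smul_smul]
      ring_nf
    rw [hmat, Matrix.smul_apply, hUdef, kron_pow, jordan_pow, jordan_pow]
    rw [Matrix.kroneckerMap_apply]
    simp only [Matrix.of_apply, smul_eq_mul]
    try ring
  by_cases hp : (x.1:ℕ) ≤ (y.1:ℕ)
  · by_cases hq : (x.2:ℕ) ≤ (y.2:ℕ)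
    · rw [Finset.sum_congr rfl hterm, if_pos ⟨hp, hq⟩]
      simp only [if_pos hp, if_pos hq]
      set i := (y.1:ℕ) - (x.1:ℕ)
      set j := (y.2:ℕ) - (x.2:ℕ)
      have key := S_eval k i j
      rw [entryVal]
      calc ∑ m ∈ Finset.range (k+1), ((-1:F)^(k-m) * (k.choose m : F) *
              ((m.choose i : F) * (m.choose j : F)))
          = ((∑ m ∈ Finset.range (k+1),
              ((-1:ℤ)^(k-m) * (k.choose m) * ((m.choose i) * (m.choose j))) : ℤ) : F) := by
            rw [Int.cast_sum]
            refine Finset.sum_congr rfl fun m _ => ?_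
            push_cast
            ring
        _ = (((if i ≤ k ∧ k ≤ i + j then ((k.choose i) * (i.choose (i+j-k)) : ℤ) else 0) : ℤ) : F) := by
            rw [key]
        _ = if i ≤ k ∧ k ≤ i + j then ((k.choose i * i.choose (i+j-k) : ℕ) : F) else 0 := by
            split_ifs <;> push_cast <;> simp
    · rw [if_neg (by tauto)]
      rw [Finset.sum_congr rfl hterm]
      refine Finset.sum_eq_zero fun m _ => ?_
      rw [if_neg hq, mul_zero, mul_zero]
  · rw [if_neg (by tauto)]
    rw [Finset.sum_congr rfl hterm]
    refine Finset.sum_eq_zero fun m _ => ?_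
    rw [if_neg hp, zero_mul, mul_zero]

end Aux

/-- Let `F` be a field and `s`, `t` positive integers. Then the minimal polynomial of the
Kronecker product `J_s(1) ⊗ J_t(1)` is `(X − 1) ^ (s ∧ t)`. -/
theorem minpoly_jordan_one_kronecker (F : Type*) [Field F] (s t : ℕ)
    (hs : 0 < s) (ht : 0 < t) :
    minpoly F (jordan F s 1 ⊗ₖ jordan F t 1) = (X - C 1) ^ wedge F s t := by
  classical
  set U := jordan F s 1 ⊗ₖ jordan F t 1 with hU
  set d := wedge F s t with hd
  set f : ℕ × ℕ → ℕ :=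
    fun p => if (((p.1 + p.2).choose p.1 : F)) ≠ 0 then p.1 + p.2 + 1 else 0 with hf
  have hwedge : d = ((Finset.range s) ×ˢ (Finset.range t)).sup f := by
    rw [hd, wedge]
  have h00 : ((0,0) : ℕ × ℕ) ∈ (Finset.range s) ×ˢ (Finset.range t) := by
    simp [Finset.mem_product, hs, ht]
  have hd1 : 1 ≤ d := by
    have hle := Finset.le_sup (f := f) h00
    rw [← hwedge] at hle
    have : f (0,0) = 1 := by simp [hf]
    omega
  -- aeval computation
  have haeval : ∀ k : ℕ, aeval U ((X - C 1 : F[X]) ^ k) = (U - 1) ^ k := by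
    intro k
    rw [map_pow, map_sub, aeval_X, aeval_C, _root_.map_one]
  -- (U-1)^d = 0
  have hzero : (U - 1) ^ d = 0 := by
    apply Matrix.ext
    intro x y
    rw [hU, Mpow_apply, Matrix.zero_apply]
    split_ifs with h
    · obtain ⟨hp, hq⟩ := h
      set i := (y.1:ℕ) - (x.1:ℕ) with hi
      set j := (y.2:ℕ) - (x.2:ℕ) with hj
      rw [entryVal]
      split_ifs with h2
      · obtain ⟨hik, hkij⟩ := h2
        by_contra hne
        have hCdi : ((d.choose i : ℕ) : F) ≠ 0 := by
          push_cast at hne ⊢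
          exact fun hc => hne (by rw [hc, zero_mul])
        have hmem : ((i, d - i) : ℕ × ℕ) ∈ (Finset.range s) ×ˢ (Finset.range t) := by
          rw [Finset.mem_product, Finset.mem_range, Finset.mem_range]
          constructor
          · have := y.1.isLt; omega
          · have := y.2.isLt; omega
        have hfval : f (i, d - i) = d + 1 := by
          rw [hf]
          simp only
          rw [show i + (d - i) = d by omega, if_pos hCdi]
        have := Finset.le_sup (f := f) hmem
        rw [← hwedge, hfval] at this
        omega
      · rfl
    · rfl
  -- attaining pair
  obtain ⟨p, hpmem, hpeq⟩ :=
    Finset.exists_mem_eq_sup ((Finset.range s) ×ˢ (Finset.range t)) ⟨(0,0), h00⟩ f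
  rw [← hwedge] at hpeq
  have hC : (((p.1 + p.2).choose p.1 : ℕ) : F) ≠ 0 := by
    by_contra hc
    rw [hf] at hpeq
    simp only [hc, ne_eq, not_true_eq_false, if_false, not_not] at hpeq
    · omega
  have hdval : d = p.1 + p.2 + 1 := by
    rw [hpeq, hf]
    simp only [if_pos hC]
  rw [Finset.mem_product, Finset.mem_range, Finset.mem_range] at hpmem
  -- (U-1)^(d-1) ≠ 0
  have hnz : (U - 1) ^ (d - 1) ≠ 0 := by
    intro hcon
    have hent := congrFun (congrFun (congrArg (fun M => (M : Matrix _ _ F)) hcon)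
      ((⟨0, hs⟩ : Fin s), (⟨0, ht⟩ : Fin t))) ((⟨p.1, hpmem.1⟩ : Fin s), (⟨p.2, hpmem.2⟩ : Fin t))
    simp only [hU] at hent
    rw [Mpow_apply, Matrix.zero_apply] at hent
    simp only [Fin.val_mk, Nat.zero_le, and_self, if_true, Nat.sub_zero] at hent
    rw [entryVal, if_pos (by omega), show d - 1 = p.1 + p.2 by omega] at hent
    rw [show p.1 + p.2 - (p.1 + p.2) = 0 by omega] at hent
    rw [Nat.choose_zero_right, Nat.mul_one] at hent
    exact hC hent
  -- minpoly argument
  have hint : IsIntegral F U := Matrix.isIntegral U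
  have hdvd : minpoly F U ∣ (X - C 1 : F[X]) ^ d :=
    minpoly.dvd F U (by rw [haeval]; exact hzero)
  obtain ⟨e, he_le, hassoc⟩ := (dvd_prime_pow (Polynomial.prime_X_sub_C (1:F)) d).mp hdvd
  have hmin_eq : minpoly F U = (X - C 1 : F[X]) ^ e :=
    Polynomial.eq_of_monic_of_associated (minpoly.monic hint)
      ((Polynomial.monic_X_sub_C (1:F)).pow e) hassoc
  have hUe : (U - 1) ^ e = 0 := by
    rw [← haeval, ← hmin_eq]
    exact minpoly.aeval F U
  have hed : e = d := by
    by_contra hne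
    have helt : e ≤ d - 1 := by omega
    apply hnz
    calc (U - 1) ^ (d - 1) = (U - 1) ^ e * (U - 1) ^ (d - 1 - e) := by
          rw [← pow_add, show e + (d - 1 - e) = d - 1 by omega]
      _ = 0 := by rw [hUe, zero_mul]
  rw [hmin_eq, hed]
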